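/- Let n ≥ 1 and let T : ℝⁿ → ℝⁿ be monotone and additively homogeneous. Then the following are equivalent: (a) there is no pair (I, J) of disjoint subsets of {1,…,n} such that I is a MIN-dominion for T and J is a MAX-dominion for T; (b) for every g ∈ ℝⁿ there exist λ ∈ ℝ and u ∈ ℝⁿ such that g + T(u) = λ·e + u. -/

import Mathlib

/-- `T` is additively homogeneous: `T(x + c·e) = T(x) + c·e`. -/
def AddHomog (n : ℕ) (T : (Fin n → ℝ) → (Fin n → ℝ)) : Prop :=
  ∀ (x : Fin n → ℝ) (c : ℝ), T (fun i => x i + c) = fun i => T x i + c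

/-- `Δ` is a MIN-dominion for `T`: there is `β` with `T_i(t·e_{Δᶜ}) ≤ β`
for all `i ∈ Δ` and all `t ≥ 0`. -/
def MinDominion (n : ℕ) (T : (Fin n → ℝ) → (Fin n → ℝ)) (Δ : Set (Fin n)) : Prop :=
  Δ.Nonempty ∧ ∃ β : ℝ, ∀ i ∈ Δ, ∀ t : ℝ, 0 ≤ t →
    T (Δᶜ.indicator fun _ => t) i ≤ β

/-- `Δ` is a MAX-dominion for `T`: there is `α` with `T_i(−t·e_{Δᶜ}) ≥ α`
for all `i ∈ Δ` and all `t ≥ 0`. -/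
def MaxDominion (n : ℕ) (T : (Fin n → ℝ) → (Fin n → ℝ)) (Δ : Set (Fin n)) : Prop :=
  Δ.Nonempty ∧ ∃ α : ℝ, ∀ i ∈ Δ, ∀ t : ℝ, 0 ≤ t →
    α ≤ T (Δᶜ.indicator fun _ => -t) i

/-- Hilbert's seminorm `‖x‖_H = max_i x_i − min_i x_i`. -/
noncomputable def hilbertSeminorm (n : ℕ) (x : Fin n → ℝ) : ℝ :=
  (⨆ i, x i) - ⨅ i, x i

/-- The additive slice space `A_α^β(T) = {x : α·e + x ≤ T(x) ≤ β·e + x}`. -/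
def addSliceSpace (n : ℕ) (T : (Fin n → ℝ) → (Fin n → ℝ)) (α β : ℝ) : Set (Fin n → ℝ) :=
  {x | ∀ i, α + x i ≤ T x i ∧ T x i ≤ β + x i}

open Filter Finset Function Topology

variable {n : ℕ}

lemma addHomog_apply {T : (Fin n → ℝ) → (Fin n → ℝ)} (hT : AddHomog n T)
    (x : Fin n → ℝ) (c : ℝ) (i : Fin n) :
    T (fun j => x j + c) i = T x i + c := congrFun (hT x c) i

lemma iterate_homog (F : (Fin n → ℝ) → (Fin n → ℝ)) (hFh : AddHomog n F) :
    ∀ (l : ℕ) (x : Fin n → ℝ) (c : ℝ),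
      F^[l] (fun j => x j + c) = fun i => F^[l] x i + c := by
  intro l
  induction l with
  | zero => intro x c; rfl
  | succ l ih =>
      intro x c
      rw [iterate_succ_apply, iterate_succ_apply, hFh x c, ih]

noncomputable def vmin (n : ℕ) (hn : 1 ≤ n) (x : Fin n → ℝ) : ℝ :=
  Finset.univ.inf' ⟨⟨0, hn⟩, Finset.mem_univ _⟩ x

noncomputable def vmax (n : ℕ) (hn : 1 ≤ n) (x : Fin n → ℝ) : ℝ :=
  Finset.univ.sup' ⟨⟨0, hn⟩, Finset.mem_univ _⟩ x

lemma vmin_le (hn : 1 ≤ n) (x : Fin n → ℝ) (i : Fin n) : vmin n hn x ≤ x i :=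
  Finset.inf'_le _ (Finset.mem_univ i)

lemma le_vmax (hn : 1 ≤ n) (x : Fin n → ℝ) (i : Fin n) : x i ≤ vmax n hn x :=
  Finset.le_sup' _ (Finset.mem_univ i)

lemma le_vmin (hn : 1 ≤ n) {x : Fin n → ℝ} {c : ℝ} (h : ∀ i, c ≤ x i) :
    c ≤ vmin n hn x := Finset.le_inf' _ _ (fun i _ => h i)

lemma vmax_le (hn : 1 ≤ n) {x : Fin n → ℝ} {c : ℝ} (h : ∀ i, x i ≤ c) :
    vmax n hn x ≤ c := Finset.sup'_le _ _ (fun i _ => h i)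

lemma exists_vmin (hn : 1 ≤ n) (x : Fin n → ℝ) : ∃ i, vmin n hn x = x i := by
  obtain ⟨i, -, hi⟩ := Finset.exists_mem_eq_inf' (⟨⟨0, hn⟩, Finset.mem_univ _⟩ :
    (Finset.univ : Finset (Fin n)).Nonempty) x
  exact ⟨i, hi⟩

lemma exists_vmax (hn : 1 ≤ n) (x : Fin n → ℝ) : ∃ i, vmax n hn x = x i := by
  obtain ⟨i, -, hi⟩ := Finset.exists_mem_eq_sup' (⟨⟨0, hn⟩, Finset.mem_univ _⟩ :
    (Finset.univ : Finset (Fin n)).Nonempty) x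
  exact ⟨i, hi⟩

lemma vmin_le_vmax (hn : 1 ≤ n) (x : Fin n → ℝ) : vmin n hn x ≤ vmax n hn x :=
  (vmin_le hn x ⟨0, hn⟩).trans (le_vmax hn x ⟨0, hn⟩)

section OrbitBounds

variable (hn : 1 ≤ n) (F : (Fin n → ℝ) → (Fin n → ℝ))

private noncomputable def mm (k : ℕ) : ℝ := vmin n hn (F^[k] 0)
private noncomputable def MM (k : ℕ) : ℝ := vmax n hn (F^[k] 0)


private lemma mm_zero : mm hn F 0 = 0 := by
  have h1 : mm hn F 0 ≤ 0 := by
    have := vmin_le hn (F^[0] 0) ⟨0, hn⟩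
    simpa [mm] using this
  have h2 : (0:ℝ) ≤ mm hn F 0 := by
    refine le_vmin hn fun i => ?_
    simp
  linarith

private lemma MM_zero : MM hn F 0 = 0 := by
  have h1 : (0:ℝ) ≤ MM hn F 0 := by
    have := le_vmax hn (F^[0] 0) ⟨0, hn⟩
    simpa [MM] using this
  have h2 : MM hn F 0 ≤ 0 := by
    refine vmax_le hn fun i => ?_
    simp
  linarith

private lemma mm_add (hFm : Monotone F) (hFh : AddHomog n F) (k l : ℕ) : mm hn F l + mm hn F k ≤ mm hn F (l + k) := by
  refine le_vmin hn fun i => ?_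
  have h0 : F^[l + k] 0 i = F^[l] (F^[k] 0) i := by
    rw [iterate_add_apply]
  have h1 : (fun j => (0 : Fin n → ℝ) j + mm hn F k) ≤ F^[k] 0 := by
    intro j
    simpa [mm] using vmin_le hn (F^[k] 0) j
  have h2 : F^[l] (fun j => (0 : Fin n → ℝ) j + mm hn F k) i ≤ F^[l] (F^[k] 0) i :=
    (hFm.iterate l) h1 i
  have h3 : F^[l] (fun j => (0 : Fin n → ℝ) j + mm hn F k) i
      = F^[l] 0 i + mm hn F k := by
    rw [iterate_homog F hFh]
  have h4 : mm hn F l ≤ F^[l] 0 i := vmin_le hn _ i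
  rw [h0]
  calc mm hn F l + mm hn F k ≤ F^[l] 0 i + mm hn F k := by linarith
    _ = F^[l] (fun j => (0 : Fin n → ℝ) j + mm hn F k) i := h3.symm
    _ ≤ F^[l] (F^[k] 0) i := h2

private lemma MM_add (hFm : Monotone F) (hFh : AddHomog n F) (k l : ℕ) : MM hn F (l + k) ≤ MM hn F l + MM hn F k := by
  refine vmax_le hn fun i => ?_
  have h0 : F^[l + k] 0 i = F^[l] (F^[k] 0) i := by
    rw [iterate_add_apply]
  have h1 : F^[k] 0 ≤ (fun j => (0 : Fin n → ℝ) j + MM hn F k) := by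
    intro j
    simpa [MM] using le_vmax hn (F^[k] 0) j
  have h2 : F^[l] (F^[k] 0) i ≤ F^[l] (fun j => (0 : Fin n → ℝ) j + MM hn F k) i :=
    (hFm.iterate l) h1 i
  have h3 : F^[l] (fun j => (0 : Fin n → ℝ) j + MM hn F k) i
      = F^[l] 0 i + MM hn F k := by
    rw [iterate_homog F hFh]
  have h4 : F^[l] 0 i ≤ MM hn F l := le_vmax hn _ i
  rw [h0]
  linarith

private lemma mm_mul (hFm : Monotone F) (hFh : AddHomog n F) (a : ℕ) : ∀ l : ℕ, (l : ℝ) * mm hn F a ≤ mm hn F (l * a) := by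
  intro l
  induction l with
  | zero => simp [mm_zero hn F]
  | succ l ih =>
      have h1 := mm_add hn F hFm hFh a (l * a)
      have h2 : (l + 1) * a = l * a + a := by ring
      rw [h2]
      push_cast
      linarith

private lemma MM_mul (hFm : Monotone F) (hFh : AddHomog n F) (a : ℕ) : ∀ l : ℕ, MM hn F (l * a) ≤ (l : ℝ) * MM hn F a := by
  intro l
  induction l with
  | zero => simp [MM_zero hn F]
  | succ l ih =>
      have h1 := MM_add hn F hFm hFh a (l * a)
      have h2 : (l + 1) * a = l * a + a := by ring
      rw [h2]
      push_cast
      linarith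

private lemma mm_le_MM (k : ℕ) : mm hn F k ≤ MM hn F k := vmin_le_vmax hn _

private lemma key_ineq (hFm : Monotone F) (hFh : AddHomog n F) (k j : ℕ) :
    mm hn F (k+1) * ((j:ℝ)+1) ≤ MM hn F (j+1) * ((k:ℝ)+1) := by
  have h1 := mm_mul hn F hFm hFh (k+1) (j+1)
  have h2 := MM_mul hn F hFm hFh (j+1) (k+1)
  have h3 : (j+1) * (k+1) = (k+1) * (j+1) := by ring
  rw [h3] at h1
  have h4 := mm_le_MM hn F ((k+1) * (j+1))
  push_cast at h1 h2
  nlinarith [h1, h2, h4]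

end OrbitBounds

lemma eig_of_bounded (hn : 1 ≤ n) (F : (Fin n → ℝ) → (Fin n → ℝ))
    (hFm : Monotone F) (hFh : AddHomog n F) (M : ℝ)
    (hM : ∀ k : ℕ, ∀ i j : Fin n, F^[k] 0 i - F^[k] 0 j ≤ M) :
    ∃ (lam : ℝ) (u : Fin n → ℝ), F u = fun i => lam + u i := by
  haveI : Nonempty (Fin n) := ⟨⟨0, hn⟩⟩
  have hM0 : 0 ≤ M := by have := hM 0 ⟨0, hn⟩ ⟨0, hn⟩; linarith
  have hgap : ∀ k, MM hn F k ≤ mm hn F k + M := by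
    intro k
    obtain ⟨i, hi⟩ := exists_vmax hn (F^[k] 0)
    obtain ⟨j, hj⟩ := exists_vmin hn (F^[k] 0)
    have := hM k i j
    simp only [MM, mm]
    rw [hi, hj]; linarith
  -- the eigenvalue
  set lamSet : Set ℝ := Set.range (fun k : ℕ => MM hn F (k+1) / ((k:ℝ)+1)) with hlamSet
  have hbdd : BddBelow lamSet := by
    refine ⟨mm hn F 1, ?_⟩
    rintro r ⟨k, rfl⟩
    rw [le_div_iff₀ (by positivity)]
    have := key_ineq hn F hFm hFh 0 k
    simpa using this
  have hlamne : lamSet.Nonempty := ⟨_, 0, rfl⟩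
  set lam := sInf lamSet with hlam
  have hlam_le : ∀ k : ℕ, lam * ((k:ℝ)+1) ≤ MM hn F (k+1) := by
    intro k
    have h1 : lam ≤ MM hn F (k+1) / ((k:ℝ)+1) := csInf_le hbdd ⟨k, rfl⟩
    rw [le_div_iff₀ (by positivity)] at h1
    linarith
  have hle_lam : ∀ k : ℕ, mm hn F (k+1) ≤ lam * ((k:ℝ)+1) := by
    intro k
    have h1 : mm hn F (k+1) / ((k:ℝ)+1) ≤ lam := by
      refine le_csInf hlamne ?_
      rintro r ⟨j, rfl⟩
      rw [div_le_div_iff₀ (by positivity) (by positivity)]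
      exact key_ineq hn F hFm hFh k j
    rw [div_le_iff₀ (by positivity)] at h1
    linarith
  have hob : ∀ (k : ℕ) (i : Fin n),
      (k:ℝ)*lam - M ≤ F^[k] 0 i ∧ F^[k] 0 i ≤ (k:ℝ)*lam + M := by
    intro k i
    cases k with
    | zero => constructor <;> simp <;> linarith
    | succ k =>
        have h1 : mm hn F (k+1) ≤ F^[k+1] 0 i := vmin_le hn _ i
        have h2 : F^[k+1] 0 i ≤ MM hn F (k+1) := le_vmax hn _ i
        have h3 := hgap (k+1)
        have h4 := hlam_le k
        have h5 := hle_lam k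
        push_cast
        constructor <;> linarith
  -- normalized map G
  set G : (Fin n → ℝ) → (Fin n → ℝ) := fun x i => F x i - lam with hG
  have hGm : Monotone G := fun x y h i => sub_le_sub_right (hFm h i) lam
  have hGh : AddHomog n G := by
    intro x c
    funext i
    simp only [hG]
    rw [addHomog_apply hFh]
    ring
  have hGF : ∀ (x : Fin n → ℝ) (i : Fin n), G x i = F x i - lam := fun _ _ => rfl
  have hv : ∀ k : ℕ, G^[k] (0 : Fin n → ℝ) = fun i => F^[k] 0 i - (k:ℝ)*lam := by
    intro k
    induction k with
    | zero => funext i; simp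
    | succ k ih =>
        have e1 : G^[k+1] (0 : Fin n → ℝ) = G (G^[k] 0) := iterate_succ_apply' G k 0
        rw [e1, ih]
        have e2 : (fun i => F^[k] 0 i - (k:ℝ)*lam)
            = (fun j => F^[k] 0 j + -((k:ℝ)*lam)) := by funext j; ring
        rw [e2, hGh (F^[k] 0) (-((k:ℝ)*lam))]
        funext i
        simp only [hG]
        have e3 : F^[k+1] (0 : Fin n → ℝ) = F (F^[k] 0) := iterate_succ_apply' F k 0
        rw [e3]
        push_cast
        ring
  have hvb : ∀ (k : ℕ) (i : Fin n), -M ≤ G^[k] 0 i ∧ G^[k] 0 i ≤ M := by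
    intro k i
    have h1 := (hob k i).1
    have h2 := (hob k i).2
    rw [hv k]
    constructor <;> [skip; skip] <;> simp only [] <;> linarith
  -- tail suprema / infima
  set Ys : ℕ → Fin n → ℝ := fun k i => sSup {r | ∃ j, k ≤ j ∧ r = G^[j] 0 i} with hYs
  set Zs : ℕ → Fin n → ℝ := fun k i => sInf {r | ∃ j, k ≤ j ∧ r = G^[j] 0 i} with hZs
  have hsne : ∀ (k : ℕ) (i : Fin n), {r | ∃ j, k ≤ j ∧ r = G^[j] 0 i}.Nonempty :=
    fun k i => ⟨G^[k] 0 i, k, le_rfl, rfl⟩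
  have hsbddA : ∀ (k : ℕ) (i : Fin n), BddAbove {r | ∃ j, k ≤ j ∧ r = G^[j] 0 i} := by
    intro k i
    exact ⟨M, by rintro r ⟨j, hj, rfl⟩; exact (hvb j i).2⟩
  have hsbddB : ∀ (k : ℕ) (i : Fin n), BddBelow {r | ∃ j, k ≤ j ∧ r = G^[j] 0 i} := by
    intro k i
    exact ⟨-M, by rintro r ⟨j, hj, rfl⟩; exact (hvb j i).1⟩
  have hYub : ∀ (k j : ℕ) (i : Fin n), k ≤ j → G^[j] 0 i ≤ Ys k i :=
    fun k j i hkj => le_csSup (hsbddA k i) ⟨j, hkj, rfl⟩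
  have hZlb : ∀ (k j : ℕ) (i : Fin n), k ≤ j → Zs k i ≤ G^[j] 0 i :=
    fun k j i hkj => csInf_le (hsbddB k i) ⟨j, hkj, rfl⟩
  have hYanti : ∀ (k k' : ℕ) (i : Fin n), k ≤ k' → Ys k' i ≤ Ys k i := by
    intro k k' i hkk
    refine csSup_le_csSup (hsbddA k i) (hsne k' i) ?_
    rintro r ⟨j, hj, rfl⟩
    exact ⟨j, hkk.trans hj, rfl⟩
  have hZmono : ∀ (k k' : ℕ) (i : Fin n), k ≤ k' → Zs k i ≤ Zs k' i := by
    intro k k' i hkk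
    refine csInf_le_csInf (hsbddB k i) (hsne k' i) ?_
    rintro r ⟨j, hj, rfl⟩
    exact ⟨j, hkk.trans hj, rfl⟩
  have hYle : ∀ (k : ℕ) (i : Fin n), Ys k i ≤ M := by
    intro k i
    refine csSup_le (hsne k i) ?_
    rintro r ⟨j, hj, rfl⟩
    exact (hvb j i).2
  have hZge : ∀ (k : ℕ) (i : Fin n), -M ≤ Zs k i := by
    intro k i
    refine le_csInf (hsne k i) ?_
    rintro r ⟨j, hj, rfl⟩
    exact (hvb j i).1
  set ys : Fin n → ℝ := fun i => sInf {r | ∃ k, r = Ys k i} with hys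
  set zs : Fin n → ℝ := fun i => sSup {r | ∃ k, r = Zs k i} with hzs
  have hyne : ∀ i : Fin n, {r | ∃ k, r = Ys k i}.Nonempty := fun i => ⟨Ys 0 i, 0, rfl⟩
  have hzne : ∀ i : Fin n, {r | ∃ k, r = Zs k i}.Nonempty := fun i => ⟨Zs 0 i, 0, rfl⟩
  have hybdd : ∀ i : Fin n, BddBelow {r | ∃ k, r = Ys k i} := by
    intro i
    refine ⟨-M, ?_⟩
    rintro r ⟨k, rfl⟩
    exact le_trans (hvb k i).1 (hYub k k i le_rfl)
  have hzbdd : ∀ i : Fin n, BddAbove {r | ∃ k, r = Zs k i} := by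
    intro i
    refine ⟨M, ?_⟩
    rintro r ⟨k, rfl⟩
    exact le_trans (hZlb k k i le_rfl) (hvb k i).2
  have hys_le : ∀ (k : ℕ) (i : Fin n), ys i ≤ Ys k i :=
    fun k i => csInf_le (hybdd i) ⟨k, rfl⟩
  have hle_zs : ∀ (k : ℕ) (i : Fin n), Zs k i ≤ zs i :=
    fun k i => le_csSup (hzbdd i) ⟨k, rfl⟩
  have hstepY : ∀ (k : ℕ) (i : Fin n), Ys (k+1) i ≤ G (Ys k) i := by
    intro k i
    refine csSup_le (hsne (k+1) i) ?_
    rintro r ⟨j, hj, rfl⟩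
    rcases Nat.exists_eq_add_of_le hj with ⟨d, rfl⟩
    have e1 : k + 1 + d = (k + d) + 1 := by omega
    rw [e1, iterate_succ_apply' G (k+d) 0]
    exact hGm (fun i' => hYub k (k+d) i' (Nat.le_add_right k d)) i
  have hstepZ : ∀ (k : ℕ) (i : Fin n), G (Zs k) i ≤ Zs (k+1) i := by
    intro k i
    refine le_csInf (hsne (k+1) i) ?_
    rintro r ⟨j, hj, rfl⟩
    rcases Nat.exists_eq_add_of_le hj with ⟨d, rfl⟩
    have e1 : k + 1 + d = (k + d) + 1 := by omega
    rw [e1, iterate_succ_apply' G (k+d) 0]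
    exact hGm (fun i' => hZlb k (k+d) i' (Nat.le_add_right k d)) i
  have hy_eps : ∀ ε : ℝ, 0 < ε → ∀ i : Fin n, ∃ k, Ys k i < ys i + ε := by
    intro ε hε i
    obtain ⟨r, ⟨k, rfl⟩, hr⟩ :=
      exists_lt_of_csInf_lt (hyne i) (lt_add_of_pos_right (ys i) hε)
    exact ⟨k, hr⟩
  have hz_eps : ∀ ε : ℝ, 0 < ε → ∀ i : Fin n, ∃ k, zs i - ε < Zs k i := by
    intro ε hε i
    obtain ⟨r, ⟨k, rfl⟩, hr⟩ :=
      exists_lt_of_lt_csSup (hzne i) (sub_lt_self (zs i) hε)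
    exact ⟨k, hr⟩
  clear_value Ys Zs ys zs
  clear_value G lam
  -- ys is a sub-fixed point of G
  have hGys : ∀ i, ys i ≤ G ys i := by
    have hglob : ∀ ε : ℝ, 0 < ε → ∀ i, ys i ≤ G ys i + ε := by
      intro ε hε i
      choose K hK using hy_eps ε hε
      set k0 := Finset.univ.sup K with hk0
      have hK0 : ∀ i', Ys k0 i' ≤ ys i' + ε := fun i' =>
        le_trans (hYanti (K i') k0 i' (Finset.le_sup (mem_univ i'))) (le_of_lt (hK i'))
      calc ys i ≤ Ys (k0+1) i := hys_le _ _
        _ ≤ G (Ys k0) i := hstepY _ _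
        _ ≤ G (fun j => ys j + ε) i := hGm (fun j => hK0 j) i
        _ = G ys i + ε := addHomog_apply hGh ys ε i
    intro i
    by_contra hlt
    push_neg at hlt
    have := hglob ((ys i - G ys i)/2) (by linarith) i
    linarith
  -- zs is a super-fixed point of G
  have hGzs : ∀ i, G zs i ≤ zs i := by
    have hglob : ∀ ε : ℝ, 0 < ε → ∀ i, G zs i ≤ zs i + ε := by
      intro ε hε i
      choose K hK using hz_eps ε hε
      set k0 := Finset.univ.sup K with hk0
      have hK0 : ∀ i', zs i' - ε ≤ Zs k0 i' := fun i' =>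
        le_trans (le_of_lt (hK i')) (hZmono (K i') k0 i' (Finset.le_sup (mem_univ i')))
      have h1 : zs ≤ fun j => Zs k0 j + ε := by
        intro j
        show zs j ≤ Zs k0 j + ε
        linarith [hK0 j]
      calc G zs i ≤ G (fun j => Zs k0 j + ε) i := hGm h1 i
        _ = G (Zs k0) i + ε := addHomog_apply hGh (Zs k0) ε i
        _ ≤ Zs (k0+1) i + ε := by linarith [hstepZ k0 i]
        _ ≤ zs i + ε := by linarith [hle_zs (k0+1) i]
    intro i
    by_contra hlt
    push_neg at hlt
    have := hglob ((G zs i - zs i)/2) (by linarith) i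
    linarith
  -- the order interval [ys, zs + C]
  set C : ℝ := vmax n hn (fun i => ys i - zs i) with hC
  have hab' : ∀ i, ys i ≤ zs i + C := by
    intro i
    have := le_vmax hn (fun i => ys i - zs i) i
    linarith
  have hGb' : ∀ i, G (fun j => zs j + C) i ≤ zs i + C := by
    intro i
    rw [addHomog_apply hGh zs C i]
    linarith [hGzs i]
  -- increasing iteration from ys
  have hUinc : ∀ (j : ℕ) (i : Fin n), G^[j] ys i ≤ G^[j+1] ys i := by
    intro j i
    rw [iterate_succ_apply G j ys]
    exact (hGm.iterate j) (fun i' => hGys i') i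
  have hUmono : ∀ i : Fin n, Monotone (fun j => G^[j] ys i) :=
    fun i => monotone_nat_of_le_succ (fun j => hUinc j i)
  have hUb : ∀ (j : ℕ) (i : Fin n), G^[j] ys i ≤ zs i + C := by
    intro j
    induction j with
    | zero => intro i; exact hab' i
    | succ j ih =>
        intro i
        rw [iterate_succ_apply' G j ys]
        calc G (G^[j] ys) i ≤ G (fun j' => zs j' + C) i := hGm (fun i' => ih i') i
          _ ≤ zs i + C := hGb' i
  set u : Fin n → ℝ := fun i => sSup {r | ∃ j : ℕ, r = G^[j] ys i} with hu
  have hune : ∀ i : Fin n, {r | ∃ j : ℕ, r = G^[j] ys i}.Nonempty :=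
    fun i => ⟨ys i, 0, rfl⟩
  have hubdd : ∀ i : Fin n, BddAbove {r | ∃ j : ℕ, r = G^[j] ys i} := by
    intro i
    exact ⟨zs i + C, by rintro r ⟨j, rfl⟩; exact hUb j i⟩
  have hU_le_u : ∀ (j : ℕ) (i : Fin n), G^[j] ys i ≤ u i :=
    fun j i => le_csSup (hubdd i) ⟨j, rfl⟩
  have h_u_le : ∀ i, u i ≤ G u i := by
    intro i
    refine csSup_le (hune i) ?_
    rintro r ⟨j, rfl⟩
    calc G^[j] ys i ≤ G^[j+1] ys i := hUinc j i
      _ = G (G^[j] ys) i := by rw [iterate_succ_apply' G j ys]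
      _ ≤ G u i := hGm (fun i' => hU_le_u j i') i
  have hu_eps : ∀ ε : ℝ, 0 < ε → ∀ i : Fin n, ∃ j, u i - ε < G^[j] ys i := by
    intro ε hε i
    obtain ⟨r, ⟨j, rfl⟩, hr⟩ :=
      exists_lt_of_lt_csSup (hune i) (sub_lt_self (u i) hε)
    exact ⟨j, hr⟩
  clear_value u
  have h_le_u : ∀ i, G u i ≤ u i := by
    have hglob : ∀ ε : ℝ, 0 < ε → ∀ i, G u i ≤ u i + ε := by
      intro ε hε i
      choose K hK using hu_eps ε hε
      set k0 := Finset.univ.sup K with hk0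
      have hK0 : ∀ i', u i' ≤ G^[k0] ys i' + ε := by
        intro i'
        have h1 := hUmono i' (Finset.le_sup (mem_univ i') : K i' ≤ k0)
        have h2 := hK i'
        simp only at h1
        linarith
      calc G u i ≤ G (fun j => G^[k0] ys j + ε) i := hGm (fun j => hK0 j) i
        _ = G (G^[k0] ys) i + ε := addHomog_apply hGh _ ε i
        _ = G^[k0+1] ys i + ε := by rw [iterate_succ_apply' G k0 ys]
        _ ≤ u i + ε := by linarith [hU_le_u (k0+1) i]
    intro i
    by_contra hlt
    push_neg at hlt
    have := hglob ((G u i - u i)/2) (by linarith) i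
    linarith
  refine ⟨lam, u, funext fun i => ?_⟩
  have h1 : G u i = u i := le_antisymm (h_le_u i) (h_u_le i)
  rw [hGF u i] at h1
  linarith

lemma rr_lt {x t : ℝ} (hx : 0 ≤ x) (ht : 0 ≤ t) (h : t/(1+t) < x/(1+x)) : t < x := by
  by_contra hc
  push_neg at hc
  rw [div_lt_div_iff₀ (by linarith) (by linarith)] at h
  nlinarith

lemma rr_bound {x c : ℝ} (hx : 0 ≤ x) (hc : c < 1) (h : x/(1+x) ≤ c) : x ≤ c/(1-c) := by
  rw [div_le_iff₀ (by linarith : (0:ℝ) < 1 + x)] at h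
  rw [le_div_iff₀ (by linarith : (0:ℝ) < 1 - c)]
  nlinarith

lemma rr_mem {x : ℝ} (hx : 0 ≤ x) : 0 ≤ x/(1+x) ∧ x/(1+x) < 1 := by
  constructor
  · positivity
  · rw [div_lt_one (by linarith)]
    linarith

lemma dominions_of_unbounded (hn : 1 ≤ n) (T : (Fin n → ℝ) → (Fin n → ℝ))
    (hmono : Monotone T) (hhom : AddHomog n T) (α β : ℝ) (Z : ℕ → Fin n → ℝ)
    (hZ0 : ∀ k i, 0 ≤ Z k i)
    (hZmin : ∀ k, ∃ i, Z k i = 0)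
    (hsl : ∀ k i, α + Z k i ≤ T (Z k) i ∧ T (Z k) i ≤ β + Z k i)
    (hub : ∀ M : ℝ, ∃ k i, M < Z k i) :
    ∃ I J : Set (Fin n), Disjoint I J ∧ MinDominion n T I ∧ MaxDominion n T J := by
  classical
  haveI : Nonempty (Fin n) := ⟨⟨0, hn⟩⟩
  have hS : ∀ k i, Z k i ≤ vmax n hn (Z k) := fun k i => le_vmax hn (Z k) i
  have hSub : ∀ M : ℝ, ∃ k, M < vmax n hn (Z k) := by
    intro M
    obtain ⟨k, i, hk⟩ := hub M
    exact ⟨k, hk.trans_le (hS k i)⟩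
  have hfreq : ∀ p : ℕ, ∃ᶠ k in atTop, (p:ℝ) < vmax n hn (Z k) := by
    intro p
    rw [frequently_atTop]
    intro N
    obtain ⟨k, hk⟩ := hSub (max (p:ℝ)
      ((Finset.range (N+1)).sup' Finset.nonempty_range_add_one (fun j => vmax n hn (Z j))))
    refine ⟨k, ?_, lt_of_le_of_lt (le_max_left _ _) hk⟩
    by_contra hc
    push_neg at hc
    have hmem : k ∈ Finset.range (N+1) := Finset.mem_range.mpr (by omega)
    have h1 : vmax n hn (Z k) ≤
        (Finset.range (N+1)).sup' Finset.nonempty_range_add_one (fun j => vmax n hn (Z j)) :=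
      Finset.le_sup' (fun j => vmax n hn (Z j)) hmem
    have h2 := lt_of_le_of_lt (le_max_right (p:ℝ) _) hk
    linarith
  obtain ⟨φ₁, hφ₁m, hφ₁⟩ := Filter.extraction_forall_of_frequently hfreq
  -- compactness in [0,1]^n × [0,1]^n
  set q : ℕ → (Fin n → ℝ) × (Fin n → ℝ) := fun k =>
    (fun i => Z (φ₁ k) i / (1 + Z (φ₁ k) i),
     fun i => (vmax n hn (Z (φ₁ k)) - Z (φ₁ k) i) / (1 + (vmax n hn (Z (φ₁ k)) - Z (φ₁ k) i)))
    with hq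
  have hD0 : ∀ k i, 0 ≤ vmax n hn (Z k) - Z k i := fun k i => sub_nonneg.mpr (hS k i)
  have hcomp : IsCompact ((Set.Icc (0 : Fin n → ℝ) 1) ×ˢ (Set.Icc (0 : Fin n → ℝ) 1)) :=
    IsCompact.prod isCompact_Icc isCompact_Icc
  have hqmem : ∀ k, q k ∈ (Set.Icc (0 : Fin n → ℝ) 1) ×ˢ (Set.Icc (0 : Fin n → ℝ) 1) := by
    intro k
    constructor
    · constructor
      · intro i
        exact (rr_mem (hZ0 (φ₁ k) i)).1
      · intro i
        exact (rr_mem (hZ0 (φ₁ k) i)).2.le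
    · constructor
      · intro i
        exact (rr_mem (hD0 (φ₁ k) i)).1
      · intro i
        exact (rr_mem (hD0 (φ₁ k) i)).2.le
  obtain ⟨a, -, φ₂, hφ₂m, hte⟩ := hcomp.tendsto_subseq hqmem
  have hlim1 : ∀ i, Tendsto
      (fun k => Z (φ₁ (φ₂ k)) i / (1 + Z (φ₁ (φ₂ k)) i)) atTop (𝓝 (a.1 i)) := by
    intro i
    have hfst : Tendsto (fun k => (q (φ₂ k)).1) atTop (𝓝 a.1) :=
      (continuous_fst.tendsto a).comp hte
    exact tendsto_pi_nhds.mp hfst i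
  have hlim2 : ∀ i, Tendsto
      (fun k => (vmax n hn (Z (φ₁ (φ₂ k))) - Z (φ₁ (φ₂ k)) i) /
        (1 + (vmax n hn (Z (φ₁ (φ₂ k))) - Z (φ₁ (φ₂ k)) i))) atTop (𝓝 (a.2 i)) := by
    intro i
    have hsnd : Tendsto (fun k => (q (φ₂ k)).2) atTop (𝓝 a.2) :=
      (continuous_snd.tendsto a).comp hte
    exact tendsto_pi_nhds.mp hsnd i
  -- bounded coordinates
  have hIbd : ∀ i, a.1 i < 1 → ∃ C, ∀ k, Z (φ₁ (φ₂ k)) i ≤ C := by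
    intro i hi
    have hc : a.1 i < (1 + a.1 i)/2 := by linarith
    have hc1 : (1 + a.1 i)/2 < 1 := by linarith
    have hev := (hlim1 i).eventually_lt_const hc
    rw [eventually_atTop] at hev
    obtain ⟨K, hK⟩ := hev
    refine ⟨max (((1 + a.1 i)/2)/(1-(1 + a.1 i)/2))
      ((Finset.range (K+1)).sup' Finset.nonempty_range_add_one (fun j => Z (φ₁ (φ₂ j)) i)), ?_⟩
    intro k
    by_cases hk : k ≤ K
    · have hmem : k ∈ Finset.range (K+1) := Finset.mem_range.mpr (by omega)
      exact le_trans (Finset.le_sup' (fun j => Z (φ₁ (φ₂ j)) i) hmem) (le_max_right _ _)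
    · push_neg at hk
      have h1 := rr_bound (hZ0 (φ₁ (φ₂ k)) i) hc1 (hK k (by omega)).le
      exact le_trans h1 (le_max_left _ _)
  have hJbd : ∀ i, a.2 i < 1 →
      ∃ C, ∀ k, vmax n hn (Z (φ₁ (φ₂ k))) - Z (φ₁ (φ₂ k)) i ≤ C := by
    intro i hi
    have hc : a.2 i < (1 + a.2 i)/2 := by linarith
    have hc1 : (1 + a.2 i)/2 < 1 := by linarith
    have hev := (hlim2 i).eventually_lt_const hc
    rw [eventually_atTop] at hev
    obtain ⟨K, hK⟩ := hev
    refine ⟨max (((1 + a.2 i)/2)/(1-(1 + a.2 i)/2))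
      ((Finset.range (K+1)).sup' Finset.nonempty_range_add_one
        (fun j => vmax n hn (Z (φ₁ (φ₂ j))) - Z (φ₁ (φ₂ j)) i)), ?_⟩
    intro k
    by_cases hk : k ≤ K
    · have hmem : k ∈ Finset.range (K+1) := Finset.mem_range.mpr (by omega)
      exact le_trans
        (Finset.le_sup' (fun j => vmax n hn (Z (φ₁ (φ₂ j))) - Z (φ₁ (φ₂ j)) i) hmem)
        (le_max_right _ _)
    · push_neg at hk
      have h1 := rr_bound (hD0 (φ₁ (φ₂ k)) i) hc1 (hK k (by omega)).le
      exact le_trans h1 (le_max_left _ _)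
  -- unbounded coordinates grow
  have hIa1 : ∀ i, a.1 i ≤ 1 := by
    intro i
    refine le_of_tendsto (hlim1 i) (Eventually.of_forall fun k => ?_)
    exact (rr_mem (hZ0 (φ₁ (φ₂ k)) i)).2.le
  have hJa1 : ∀ i, a.2 i ≤ 1 := by
    intro i
    refine le_of_tendsto (hlim2 i) (Eventually.of_forall fun k => ?_)
    exact (rr_mem (hD0 (φ₁ (φ₂ k)) i)).2.le
  have hInb : ∀ i, ¬(a.1 i < 1) → ∀ t : ℝ, 0 ≤ t →
      ∀ᶠ k in atTop, t < Z (φ₁ (φ₂ k)) i := by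
    intro i hi t ht
    have h1 : t/(1+t) < a.1 i := lt_of_lt_of_le (rr_mem ht).2 (not_lt.mp hi)
    filter_upwards [(hlim1 i).eventually_const_lt h1] with k hk
    exact rr_lt (hZ0 (φ₁ (φ₂ k)) i) ht hk
  have hJnb : ∀ i, ¬(a.2 i < 1) → ∀ t : ℝ, 0 ≤ t →
      ∀ᶠ k in atTop, t < vmax n hn (Z (φ₁ (φ₂ k))) - Z (φ₁ (φ₂ k)) i := by
    intro i hi t ht
    have h1 : t/(1+t) < a.2 i := lt_of_lt_of_le (rr_mem ht).2 (not_lt.mp hi)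
    filter_upwards [(hlim2 i).eventually_const_lt h1] with k hk
    exact rr_lt (hD0 (φ₁ (φ₂ k)) i) ht hk
  -- the two dominions
  refine ⟨{i | a.1 i < 1}, {i | a.2 i < 1}, ?_, ⟨?_, ?_⟩, ⟨?_, ?_⟩⟩
  · -- disjoint
    rw [Set.disjoint_left]
    intro i hi1 hi2
    obtain ⟨C1, hC1⟩ := hIbd i hi1
    obtain ⟨C2, hC2⟩ := hJbd i hi2
    obtain ⟨k, hk⟩ := exists_nat_gt (C1 + C2)
    have h1 : (k:ℝ) ≤ (φ₂ k : ℝ) := by exact_mod_cast hφ₂m.le_apply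
    have h2 := hφ₁ (φ₂ k)
    have h3 := hC1 k
    have h4 := hC2 k
    linarith
  · -- I nonempty
    by_contra hIe
    rw [Set.not_nonempty_iff_eq_empty] at hIe
    have hall : ∀ᶠ k in atTop, ∀ i : Fin n, (0:ℝ) < Z (φ₁ (φ₂ k)) i := by
      rw [Filter.eventually_all]
      intro i
      refine hInb i ?_ 0 le_rfl
      intro hi
      have : i ∈ ({i | a.1 i < 1} : Set (Fin n)) := hi
      simp [hIe] at this
    obtain ⟨k, hk⟩ := hall.exists
    obtain ⟨i, hi⟩ := hZmin (φ₁ (φ₂ k))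
    have := hk i
    rw [hi] at this
    exact lt_irrefl 0 this
  · -- MIN dominion bound
    obtain ⟨CI, hCI⟩ : ∃ C, ∀ i, a.1 i < 1 → ∀ k, Z (φ₁ (φ₂ k)) i ≤ C := by
      choose! C hC using hIbd
      exact ⟨vmax n hn C, fun i hi k => (hC i hi k).trans (le_vmax hn C i)⟩
    refine ⟨β + CI, ?_⟩
    intro i hi t ht
    have hev : ∀ᶠ k in atTop, ∀ j : Fin n, ¬(a.1 j < 1) → t < Z (φ₁ (φ₂ k)) j := by
      rw [Filter.eventually_all]
      intro j
      by_cases hj : a.1 j < 1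
      · exact Eventually.of_forall (fun k hcon => absurd hj hcon)
      · filter_upwards [hInb j hj t ht] with k hk using fun _ => hk
    obtain ⟨k, hk⟩ := hev.exists
    have hle : ({i | a.1 i < 1} : Set (Fin n))ᶜ.indicator (fun _ => t) ≤ Z (φ₁ (φ₂ k)) := by
      intro j
      by_cases hj : a.1 j < 1
      · have hjm : j ∉ ({i | a.1 i < 1} : Set (Fin n))ᶜ := by
          simp only [Set.mem_compl_iff, Set.mem_setOf_eq, not_not]
          exact hj
        rw [Set.indicator_of_notMem hjm]
        exact hZ0 (φ₁ (φ₂ k)) j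
      · have hjm : j ∈ ({i | a.1 i < 1} : Set (Fin n))ᶜ := by
          simp only [Set.mem_compl_iff, Set.mem_setOf_eq]
          exact hj
        rw [Set.indicator_of_mem hjm]
        exact (hk j hj).le
    calc T (({i | a.1 i < 1} : Set (Fin n))ᶜ.indicator (fun _ => t)) i
        ≤ T (Z (φ₁ (φ₂ k))) i := hmono hle i
      _ ≤ β + Z (φ₁ (φ₂ k)) i := (hsl _ i).2
      _ ≤ β + CI := by linarith [hCI i hi k]
  · -- J nonempty
    by_contra hJe
    rw [Set.not_nonempty_iff_eq_empty] at hJe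
    have hall : ∀ᶠ k in atTop, ∀ i : Fin n,
        (0:ℝ) < vmax n hn (Z (φ₁ (φ₂ k))) - Z (φ₁ (φ₂ k)) i := by
      rw [Filter.eventually_all]
      intro i
      refine hJnb i ?_ 0 le_rfl
      intro hi
      have : i ∈ ({i | a.2 i < 1} : Set (Fin n)) := hi
      simp [hJe] at this
    obtain ⟨k, hk⟩ := hall.exists
    obtain ⟨i, hi⟩ := exists_vmax hn (Z (φ₁ (φ₂ k)))
    have := hk i
    rw [hi] at this
    simp at this
  · -- MAX dominion bound
    obtain ⟨CJ, hCJ⟩ : ∃ C, ∀ i, a.2 i < 1 →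
        ∀ k, vmax n hn (Z (φ₁ (φ₂ k))) - Z (φ₁ (φ₂ k)) i ≤ C := by
      choose! C hC using hJbd
      exact ⟨vmax n hn C, fun i hi k => (hC i hi k).trans (le_vmax hn C i)⟩
    refine ⟨α - CJ, ?_⟩
    intro j hj t ht
    have hev : ∀ᶠ k in atTop, ∀ i : Fin n, ¬(a.2 i < 1) →
        t < vmax n hn (Z (φ₁ (φ₂ k))) - Z (φ₁ (φ₂ k)) i := by
      rw [Filter.eventually_all]
      intro i
      by_cases hi : a.2 i < 1
      · exact Eventually.of_forall (fun k hcon => absurd hi hcon)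
      · filter_upwards [hJnb i hi t ht] with k hk using fun _ => hk
    obtain ⟨k, hk⟩ := hev.exists
    have hge : (fun i => Z (φ₁ (φ₂ k)) i + -(vmax n hn (Z (φ₁ (φ₂ k)))))
        ≤ ({i | a.2 i < 1} : Set (Fin n))ᶜ.indicator (fun _ => -t) := by
      intro i
      by_cases hi : a.2 i < 1
      · have him : i ∉ ({i | a.2 i < 1} : Set (Fin n))ᶜ := by
          simp only [Set.mem_compl_iff, Set.mem_setOf_eq, not_not]
          exact hi
        rw [Set.indicator_of_notMem him]
        have := hS (φ₁ (φ₂ k)) i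
        show Z (φ₁ (φ₂ k)) i + -(vmax n hn (Z (φ₁ (φ₂ k)))) ≤ 0
        linarith
      · have him : i ∈ ({i | a.2 i < 1} : Set (Fin n))ᶜ := by
          simp only [Set.mem_compl_iff, Set.mem_setOf_eq]
          exact hi
        rw [Set.indicator_of_mem him]
        have := (hk i hi).le
        show Z (φ₁ (φ₂ k)) i + -(vmax n hn (Z (φ₁ (φ₂ k)))) ≤ -t
        linarith
    have h1 : T (fun i => Z (φ₁ (φ₂ k)) i + -(vmax n hn (Z (φ₁ (φ₂ k))))) j
        = T (Z (φ₁ (φ₂ k))) j + -(vmax n hn (Z (φ₁ (φ₂ k)))) :=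
      addHomog_apply hhom _ _ j
    have h2 := hmono hge j
    have h3 := (hsl (φ₁ (φ₂ k)) j).1
    have h4 := hCJ j hj k
    rw [h1] at h2
    linarith

lemma no_dominions_of_solvable (hn : 1 ≤ n) (T : (Fin n → ℝ) → (Fin n → ℝ))
    (hmono : Monotone T) (hhom : AddHomog n T)
    (hsolv : ∀ g : Fin n → ℝ, ∃ (lam : ℝ) (u : Fin n → ℝ),
        (fun i => g i + T u i) = fun i => lam + u i) :
    ¬ ∃ I J : Set (Fin n), Disjoint I J ∧ MinDominion n T I ∧ MaxDominion n T J := by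
  classical
  haveI : Nonempty (Fin n) := ⟨⟨0, hn⟩⟩
  rintro ⟨I, J, hdisj, ⟨hIne, β, hβ⟩, ⟨hJne, α, hα⟩⟩
  obtain ⟨lam, u, hu⟩ := hsolv (fun i => if i ∈ J then (β - α)/2 + 1 else
    (if i ∈ I then -((β - α)/2 + 1) else 0))
  have hu' : ∀ i, (if i ∈ J then (β - α)/2 + 1 else (if i ∈ I then -((β - α)/2 + 1) else 0))
      + T u i = lam + u i := fun i => congrFun hu i
  obtain ⟨imax, hiI, himax⟩ := Set.exists_max_image I u (Set.toFinite I) hIne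
  obtain ⟨jmin, hjJ, hjmin⟩ := Set.exists_min_image J u (Set.toFinite J) hJne
  -- upper bound on lam coming from the MIN-dominion I
  have ht : 0 ≤ vmax n hn u - u imax := by
    have := le_vmax hn u imax; linarith
  have hle : u ≤ fun j => Iᶜ.indicator (fun _ => vmax n hn u - u imax) j + u imax := by
    intro j
    by_cases hj : j ∈ I
    · show u j ≤ Iᶜ.indicator (fun _ => vmax n hn u - u imax) j + u imax
      rw [Set.indicator_of_notMem (by simp [hj] : j ∉ Iᶜ)]
      have := himax j hj
      linarith
    · show u j ≤ Iᶜ.indicator (fun _ => vmax n hn u - u imax) j + u imax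
      rw [Set.indicator_of_mem (by simp [hj] : j ∈ Iᶜ)]
      have := le_vmax hn u j
      linarith
  have h1 : T u imax ≤ β + u imax := by
    have h2 := hmono hle imax
    rw [addHomog_apply hhom _ _ imax] at h2
    have h3 := hβ imax hiI _ ht
    linarith
  have hgi : (if imax ∈ J then (β - α)/2 + 1 else (if imax ∈ I then -((β - α)/2 + 1) else 0))
      = -((β - α)/2 + 1) := by
    have : imax ∉ J := Set.disjoint_left.mp hdisj hiI
    simp [this, hiI]
  have hlam1 : lam ≤ -((β - α)/2 + 1) + β := by
    have h4 := hu' imax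
    rw [hgi] at h4
    linarith
  -- lower bound on lam coming from the MAX-dominion J
  have ht' : 0 ≤ u jmin - vmin n hn u := by
    have := vmin_le hn u jmin; linarith
  have hge : (fun i => Jᶜ.indicator (fun _ => -(u jmin - vmin n hn u)) i + u jmin) ≤ u := by
    intro i
    by_cases hi : i ∈ J
    · show Jᶜ.indicator (fun _ => -(u jmin - vmin n hn u)) i + u jmin ≤ u i
      rw [Set.indicator_of_notMem (by simp [hi] : i ∉ Jᶜ)]
      have := hjmin i hi
      linarith
    · show Jᶜ.indicator (fun _ => -(u jmin - vmin n hn u)) i + u jmin ≤ u i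
      rw [Set.indicator_of_mem (by simp [hi] : i ∈ Jᶜ)]
      have := vmin_le hn u i
      linarith
  have h1' : α + u jmin ≤ T u jmin := by
    have h2 := hmono hge jmin
    rw [addHomog_apply hhom _ _ jmin] at h2
    have h3 := hα jmin hjJ _ ht'
    linarith
  have hgj : (if jmin ∈ J then (β - α)/2 + 1 else (if jmin ∈ I then -((β - α)/2 + 1) else 0))
      = (β - α)/2 + 1 := by simp [hjJ]
  have hlam2 : (β - α)/2 + 1 + α ≤ lam := by
    have h4 := hu' jmin
    rw [hgj] at h4
    linarith
  linarith

private def FF (T : (Fin n → ℝ) → (Fin n → ℝ)) (g : Fin n → ℝ) :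
    (Fin n → ℝ) → (Fin n → ℝ) := fun x i => g i + T x i

lemma solvable_of_no_dominions (hn : 1 ≤ n) (T : (Fin n → ℝ) → (Fin n → ℝ))
    (hmono : Monotone T) (hhom : AddHomog n T)
    (hnodom : ¬ ∃ I J : Set (Fin n), Disjoint I J ∧ MinDominion n T I ∧ MaxDominion n T J)
    (g : Fin n → ℝ) :
    ∃ (lam : ℝ) (u : Fin n → ℝ), (fun i => g i + T u i) = fun i => lam + u i := by
  haveI : Nonempty (Fin n) := ⟨⟨0, hn⟩⟩
  have hFm : Monotone (FF T g) := fun x y h i => add_le_add_right (hmono h i) (g i)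
  have hFh : AddHomog n (FF T g) := by
    intro x c
    funext i
    show g i + T (fun j => x j + c) i = (g i + T x i) + c
    rw [addHomog_apply hhom]
    ring
  by_cases hB : ∃ M : ℝ, ∀ (k : ℕ) (i j : Fin n), (FF T g)^[k] 0 i - (FF T g)^[k] 0 j ≤ M
  · obtain ⟨M, hM⟩ := hB
    obtain ⟨lam, u, hu⟩ := eig_of_bounded hn (FF T g) hFm hFh M hM
    exact ⟨lam, u, hu⟩
  · exfalso
    apply hnodom
    push_neg at hB
    have hsliceF : ∀ (k : ℕ) (i : Fin n),
        vmin n hn (FF T g 0) + (FF T g)^[k] 0 i ≤ (FF T g)^[k+1] 0 i ∧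
        (FF T g)^[k+1] 0 i ≤ vmax n hn (FF T g 0) + (FF T g)^[k] 0 i := by
      intro k
      induction k with
      | zero =>
          intro i
          rw [iterate_one]
          have h1 := vmin_le hn (FF T g 0) i
          have h2 := le_vmax hn (FF T g 0) i
          constructor
          · simp only [iterate_zero, id_eq, Pi.zero_apply]
            linarith
          · simp only [iterate_zero, id_eq, Pi.zero_apply]
            linarith
      | succ k ih =>
          intro i
          have e1 : (FF T g)^[k+2] (0 : Fin n → ℝ) = FF T g ((FF T g)^[k+1] 0) :=
            iterate_succ_apply' (FF T g) (k+1) 0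
          have e2 : (FF T g) ((FF T g)^[k] 0) i = (FF T g)^[k+1] 0 i :=
            (congrFun (iterate_succ_apply' (FF T g) k 0) i).symm
          constructor
          · have hle : (fun j => (FF T g)^[k] 0 j + vmin n hn (FF T g 0)) ≤ (FF T g)^[k+1] 0 := by
              intro j
              have := (ih j).1
              show (FF T g)^[k] 0 j + vmin n hn (FF T g 0) ≤ _
              linarith
            have h2 := hFm hle i
            rw [addHomog_apply hFh _ _ i, e2, ← e1] at h2
            linarith
          · have hle : (FF T g)^[k+1] 0 ≤ (fun j => (FF T g)^[k] 0 j + vmax n hn (FF T g 0)) := by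
              intro j
              have := (ih j).2
              show _ ≤ (FF T g)^[k] 0 j + vmax n hn (FF T g 0)
              linarith
            have h2 := hFm hle i
            rw [addHomog_apply hFh _ _ i, e2, ← e1] at h2
            linarith
    refine dominions_of_unbounded hn T hmono hhom
      (vmin n hn (FF T g 0) - vmax n hn g) (vmax n hn (FF T g 0) - vmin n hn g)
      (fun k i => (FF T g)^[k] 0 i + -(vmin n hn ((FF T g)^[k] 0))) ?_ ?_ ?_ ?_
    · intro k i
      have := vmin_le hn ((FF T g)^[k] 0) i
      show 0 ≤ (FF T g)^[k] 0 i + -(vmin n hn ((FF T g)^[k] 0))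
      linarith
    · intro k
      obtain ⟨i, hi⟩ := exists_vmin hn ((FF T g)^[k] 0)
      refine ⟨i, ?_⟩
      show (FF T g)^[k] 0 i + -(vmin n hn ((FF T g)^[k] 0)) = 0
      rw [← hi]
      ring
    · intro k i
      have hT : T (fun j => (FF T g)^[k] 0 j + -(vmin n hn ((FF T g)^[k] 0))) i
          = T ((FF T g)^[k] 0) i + -(vmin n hn ((FF T g)^[k] 0)) := addHomog_apply hhom _ _ i
      have hTF : (FF T g) ((FF T g)^[k] 0) i = g i + T ((FF T g)^[k] 0) i := rfl
      have e2 : (FF T g) ((FF T g)^[k] 0) i = (FF T g)^[k+1] 0 i :=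
        (congrFun (iterate_succ_apply' (FF T g) k 0) i).symm
      have hTval : T ((FF T g)^[k] 0) i = (FF T g)^[k+1] 0 i - g i := by
        rw [← e2, hTF]; ring
      have h1 := (hsliceF k i).1
      have h2 := (hsliceF k i).2
      have hg1 := vmin_le hn g i
      have hg2 := le_vmax hn g i
      constructor
      · show vmin n hn (FF T g 0) - vmax n hn g
            + ((FF T g)^[k] 0 i + -(vmin n hn ((FF T g)^[k] 0)))
          ≤ T (fun j => (FF T g)^[k] 0 j + -(vmin n hn ((FF T g)^[k] 0))) i
        rw [hT, hTval]
        linarith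
      · show T (fun j => (FF T g)^[k] 0 j + -(vmin n hn ((FF T g)^[k] 0))) i
          ≤ vmax n hn (FF T g 0) - vmin n hn g
            + ((FF T g)^[k] 0 i + -(vmin n hn ((FF T g)^[k] 0)))
        rw [hT, hTval]
        linarith
    · intro M
      obtain ⟨k, i, j, hkij⟩ := hB M
      refine ⟨k, i, ?_⟩
      have := vmin_le hn ((FF T g)^[k] 0) j
      show M < (FF T g)^[k] 0 i + -(vmin n hn ((FF T g)^[k] 0))
      linarith

theorem stmt3 (n : ℕ) (hn : 1 ≤ n)
    (T : (Fin n → ℝ) → (Fin n → ℝ))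
    (hmono : Monotone T) (hhom : AddHomog n T) :
    (¬ ∃ I J : Set (Fin n),
        Disjoint I J ∧ MinDominion n T I ∧ MaxDominion n T J) ↔
    (∀ g : Fin n → ℝ, ∃ (lam : ℝ) (u : Fin n → ℝ),
        (fun i => g i + T u i) = fun i => lam + u i) := by
  constructor
  · intro hnodom g
    exact solvable_of_no_dominions hn T hmono hhom hnodom g
  · intro hsolv
    exact no_dominions_of_solvable hn T hmono hhom hsolv
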